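/- Let (X, 𝔪) be a finite measure space and let λ denote Lebesgue measure on ℝ. For each n ∈ ℕ let f_n : X × ℝ → ℝ be measurable with 0 ≤ f_n ≤ 1 and such that for every x ∈ X the function ξ ↦ f_n(x, ξ) is non-increasing. Let f : X × ℝ → ℝ be a bounded measurable function such that ∫_{X×ℝ} f_n g d(𝔪⊗λ) → ∫_{X×ℝ} f g d(𝔪⊗λ) for every g ∈ L¹(𝔪⊗λ) (i.e. f_n → f weak* in L^∞(X×ℝ)). Then for 𝔪-almost every x ∈ X the following holds: for λ⊗λ-almost every pair (ξ₁, ξ₂) ∈ ℝ² with ξ₁ ≤ ξ₂ one has f(x, ξ₁) ≥ f(x, ξ₂). -/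

import Mathlib

open MeasureTheory Filter

/-- Any weak* limit in `L^∞(X × ℝ)` of `[0,1]`-valued measurable functions that are
non-increasing in the real variable `ξ` is, for `𝔪`-almost every `x`, almost everywhere
non-increasing in `ξ`. -/
theorem weakStar_limit_of_antitone_kinetic_functions
    {X : Type*} [MeasurableSpace X] (𝔪 : Measure X) [IsFiniteMeasure 𝔪]
    (f : ℕ → X × ℝ → ℝ)
    (hf_meas : ∀ n, Measurable (f n))
    (hf_mem : ∀ n p, f n p ∈ Set.Icc (0 : ℝ) 1)
    (hf_anti : ∀ n x, Antitone (fun ξ => f n (x, ξ)))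
    (F : X × ℝ → ℝ) (hF_meas : Measurable F)
    (C : ℝ) (hF_bdd : ∀ p, |F p| ≤ C)
    (hconv : ∀ g : X × ℝ → ℝ, Integrable g (𝔪.prod volume) →
      Tendsto (fun n => ∫ p, f n p * g p ∂(𝔪.prod volume)) atTop
        (nhds (∫ p, F p * g p ∂(𝔪.prod volume)))) :
    ∀ᵐ x ∂𝔪, ∀ᵐ q : ℝ × ℝ ∂(volume : Measure (ℝ × ℝ)),
      q.1 ≤ q.2 → F (x, q.2) ≤ F (x, q.1) := by
  set μ := 𝔪.prod (volume : Measure ℝ) with hμdef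
  -- Step 1: for each fixed translation t ≥ 0, the set where F increases by t is null.
  have ht_null : ∀ t : ℝ, 0 ≤ t → μ {p : X × ℝ | F p < F (p.1, p.2 + t)} = 0 := by
    intro t ht
    have hFt : Measurable fun p : X × ℝ => F (p.1, p.2 + t) :=
      hF_meas.comp (measurable_fst.prodMk (measurable_snd.add_const t))
    have hNmeas : MeasurableSet {p : X × ℝ | F p < F (p.1, p.2 + t)} :=
      measurableSet_lt hF_meas hFt
    -- the translation map and its measure-preserving property
    set S : X × ℝ → X × ℝ := fun p => (p.1, p.2 + t) with hSdef
    have hT : MeasurePreserving S μ μ :=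
      (MeasurePreserving.id 𝔪).prod (measurePreserving_add_right volume t)
    have hSemb : MeasurableEmbedding S := by
      have : ⇑((MeasurableEquiv.refl X).prodCongr (MeasurableEquiv.addRight t)) = S := rfl
      exact this ▸ ((MeasurableEquiv.refl X).prodCongr
        (MeasurableEquiv.addRight t)).measurableEmbedding
    have key : ∀ R : ℕ,
        μ ({p : X × ℝ | F p < F (p.1, p.2 + t)} ∩ {p | |p.2| ≤ (R : ℝ)}) = 0 := by
      intro R
      set E : Set (X × ℝ) :=
        {p : X × ℝ | F p < F (p.1, p.2 + t)} ∩ {p | |p.2| ≤ (R : ℝ)} with hEdef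
      have hEmeas : MeasurableSet E :=
        hNmeas.inter (measurableSet_le measurable_snd.abs measurable_const)
      have hEfin : μ E < ⊤ := by
        have hsub : E ⊆ Set.univ ×ˢ Set.Icc (-(R : ℝ)) R := by
          intro p hp
          exact ⟨trivial, abs_le.1 hp.2⟩
        calc μ E ≤ μ (Set.univ ×ˢ Set.Icc (-(R : ℝ)) R) := measure_mono hsub
          _ = 𝔪 Set.univ * volume (Set.Icc (-(R : ℝ)) R) := Measure.prod_prod _ _
          _ < ⊤ := ENNReal.mul_lt_top (measure_lt_top _ _) (by simp [Real.volume_Icc])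
      -- the test function g and its translate g'
      set g : X × ℝ → ℝ := E.indicator (fun _ => (1 : ℝ)) with hgdef
      have hg_nonneg : ∀ p, 0 ≤ g p := fun p => Set.indicator_nonneg (fun _ _ => zero_le_one) p
      have hg_int : Integrable g μ := by
        rw [hgdef, integrable_indicator_iff hEmeas]
        exact integrableOn_const hEfin.ne
      set E' : Set (X × ℝ) := (fun p : X × ℝ => (p.1, p.2 - t)) ⁻¹' E with hE'def
      have hSneg : MeasurePreserving (fun p : X × ℝ => (p.1, p.2 - t)) μ μ := by
        have := (MeasurePreserving.id 𝔪).prod (measurePreserving_add_right volume (-t))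
        simpa [sub_eq_add_neg, Prod.map_def] using this
      have hE'meas : MeasurableSet E' :=
        (measurable_fst.prodMk (measurable_snd.sub_const t)) hEmeas
      have hE'fin : μ E' < ⊤ := by
        rw [hE'def, hSneg.measure_preimage hEmeas.nullMeasurableSet]
        exact hEfin
      set g' : X × ℝ → ℝ := E'.indicator (fun _ => (1 : ℝ)) with hg'def
      have hg'_int : Integrable g' μ := by
        rw [hg'def, integrable_indicator_iff hE'meas]
        exact integrableOn_const hE'fin.ne
      have hg'g : ∀ p : X × ℝ, g' (S p) = g p := by
        intro p
        show E'.indicator (fun _ => (1 : ℝ)) (S p) = E.indicator (fun _ => (1 : ℝ)) p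
        have h : S p ∈ E' ↔ p ∈ E := by
          simp only [hE'def, Set.mem_preimage, hSdef, add_sub_cancel_right, Prod.mk.eta]
        by_cases hp : p ∈ E
        · rw [Set.indicator_of_mem (h.2 hp), Set.indicator_of_mem hp]
        · rw [Set.indicator_of_notMem (fun c => hp (h.1 c)), Set.indicator_of_notMem hp]
      -- integrability of products
      have hfn_bd : ∀ n, ∃ c : ℝ, ∀ p : X × ℝ, ‖f n p‖ ≤ c := by
        intro n
        exact ⟨1, fun p => by
          rw [Real.norm_eq_abs, abs_le]
          exact ⟨by linarith [(hf_mem n p).1], (hf_mem n p).2⟩⟩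
      have int2 : ∀ n, Integrable (fun p => f n p * g p) μ := fun n =>
        hg_int.bdd_mul (hf_meas n).aestronglyMeasurable (ae_of_all _ (hfn_bd n).choose_spec)
      have int1 : ∀ n, Integrable (fun p => f n (S p) * g p) μ := by
        intro n
        refine hg_int.bdd_mul (c := (hfn_bd n).choose) ((hf_meas n).comp hSemb.measurable).aestronglyMeasurable ?_
        exact ae_of_all _ fun p => (hfn_bd n).choose_spec (S p)
      -- translation identity for each n
      have step1 : ∀ n, (∫ p, f n p * g' p ∂μ) = ∫ p, f n (S p) * g p ∂μ := by
        intro n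
        rw [← hT.integral_comp hSemb (fun p => f n p * g' p)]
        exact integral_congr_ae (Filter.Eventually.of_forall fun p => by dsimp only; rw [hg'g p])
      have step1F : (∫ p, F p * g' p ∂μ) = ∫ p, F (S p) * g p ∂μ := by
        rw [← hT.integral_comp hSemb (fun p => F p * g' p)]
        exact integral_congr_ae (Filter.Eventually.of_forall fun p => by dsimp only; rw [hg'g p])
      -- monotonicity for each n
      have step2 : ∀ n, (∫ p, f n (S p) * g p ∂μ) ≤ ∫ p, f n p * g p ∂μ := by
        intro n
        refine integral_mono (int1 n) (int2 n) fun p => ?_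
        exact mul_le_mul_of_nonneg_right
          (hf_anti n p.1 (le_add_of_nonneg_right ht)) (hg_nonneg p)
      -- pass to the limit
      have hlim : (∫ p, F (S p) * g p ∂μ) ≤ ∫ p, F p * g p ∂μ := by
        rw [← step1F]
        refine le_of_tendsto_of_tendsto' (hconv g' hg'_int) (hconv g hg_int) fun n => ?_
        rw [step1 n]
        exact step2 n
      -- conclude μ E = 0
      set ψ : X × ℝ → ℝ := fun p => F (S p) - F p with hψdef
      have hψ_meas : Measurable ψ := (hF_meas.comp hSemb.measurable).sub hF_meas
      have hψint : IntegrableOn ψ E μ := by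
        refine Measure.integrableOn_of_bounded hEfin.ne hψ_meas.aestronglyMeasurable
          (M := 2 * C) (Filter.Eventually.of_forall fun p => ?_)
        have h1 := hF_bdd (S p)
        have h2 := hF_bdd p
        rw [Real.norm_eq_abs]
        have := abs_sub (F (S p)) (F p)
        calc |F (S p) - F p| ≤ |F (S p)| + |F p| := abs_sub _ _
          _ ≤ 2 * C := by linarith
      have hprod : (fun p => ψ p * g p) = E.indicator ψ := by
        funext p
        by_cases hp : p ∈ E
        · simp [hgdef, Set.indicator_of_mem hp]
        · simp [hgdef, Set.indicator_of_notMem hp]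
      have hIψ : (∫ p in E, ψ p ∂μ) ≤ 0 := by
        have hsub : (∫ p, ψ p * g p ∂μ)
            = (∫ p, F (S p) * g p ∂μ) - ∫ p, F p * g p ∂μ := by
          have hint1 : Integrable (fun p => F (S p) * g p) μ := by
            refine hg_int.bdd_mul (c := C) ((hF_meas.comp hSemb.measurable)).aestronglyMeasurable ?_
            exact ae_of_all _ fun p => by rw [Real.norm_eq_abs]; exact hF_bdd (S p)
          have hint2 : Integrable (fun p => F p * g p) μ := by
            refine hg_int.bdd_mul (c := C) hF_meas.aestronglyMeasurable ?_
            exact ae_of_all _ fun p => by rw [Real.norm_eq_abs]; exact hF_bdd p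
          rw [← integral_sub hint1 hint2]
          exact integral_congr_ae (Filter.Eventually.of_forall fun p => by ring)
        rw [← integral_indicator hEmeas, ← hprod, hsub]
        linarith
      by_contra hne
      have hpos : 0 < μ (Function.support ψ ∩ E) := by
        have hsub : E ⊆ Function.support ψ ∩ E := by
          intro p hp
          exact ⟨ne_of_gt (sub_pos.2 hp.1), hp⟩
        calc (0 : ENNReal) < μ E := by
              rcases eq_or_ne (μ E) 0 with h | h
              · exact absurd h hne
              · exact pos_iff_ne_zero.2 h
          _ ≤ μ (Function.support ψ ∩ E) := measure_mono hsub
      have hnn : 0 ≤ᵐ[μ.restrict E] ψ := by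
        filter_upwards [ae_restrict_mem hEmeas] with p hp
        exact (sub_pos.2 hp.1).le
      have := (setIntegral_pos_iff_support_of_nonneg_ae hnn hψint).2 hpos
      linarith
    -- union over the strips
    have hcover : {p : X × ℝ | F p < F (p.1, p.2 + t)} ⊆
        ⋃ R : ℕ, ({p : X × ℝ | F p < F (p.1, p.2 + t)} ∩ {p | |p.2| ≤ (R : ℝ)}) := by
      intro p hp
      obtain ⟨R, hR⟩ := exists_nat_ge |p.2|
      exact Set.mem_iUnion.2 ⟨R, hp, hR⟩
    exact measure_mono_null hcover (measure_iUnion_null key)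
  -- Step 2: combine over all t via Fubini on ((X × ℝ) × ℝ).
  set N : Set ((X × ℝ) × ℝ) := {q | 0 ≤ q.2 ∧ F q.1 < F (q.1.1, q.1.2 + q.2)} with hNdef
  have hNmeas : MeasurableSet N := by
    refine MeasurableSet.inter (measurableSet_le measurable_const measurable_snd) ?_
    exact measurableSet_lt (hF_meas.comp measurable_fst)
      (hF_meas.comp ((measurable_fst.fst).prodMk (measurable_fst.snd.add measurable_snd)))
  have hNnull : (μ.prod volume) N = 0 := by
    rw [Measure.prod_apply_symm hNmeas]
    have hsec : ∀ t : ℝ, μ ((fun z : X × ℝ => (z, t)) ⁻¹' N) = 0 := by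
      intro t
      by_cases ht : 0 ≤ t
      · refine measure_mono_null (fun p hp => ?_) (ht_null t ht)
        exact hp.2
      · have : ((fun z : X × ℝ => (z, t)) ⁻¹' N) = ∅ := by
          ext p; simp only [Set.mem_preimage, Set.mem_empty_iff_false, iff_false]
          exact fun hp => ht hp.1
        simp [this]
    simp [hsec]
  have hassoc := measurePreserving_prodAssoc 𝔪 (volume : Measure ℝ) (volume : Measure ℝ)
  have hP : ∀ᵐ r ∂(𝔪.prod ((volume : Measure ℝ).prod volume)),
      ¬(0 ≤ r.2.2 ∧ F (r.1, r.2.1) < F (r.1, r.2.1 + r.2.2)) := by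
    have hms : MeasurableSet {r : X × ℝ × ℝ |
        ¬(0 ≤ r.2.2 ∧ F (r.1, r.2.1) < F (r.1, r.2.1 + r.2.2))} := by
      refine (MeasurableSet.inter ?_ ?_).compl
      · exact measurableSet_le measurable_const measurable_snd.snd
      · exact measurableSet_lt (hF_meas.comp (measurable_fst.prodMk measurable_snd.fst))
          (hF_meas.comp (measurable_fst.prodMk (measurable_snd.fst.add measurable_snd.snd)))
    rw [← hassoc.map_eq, ae_map_iff hassoc.aemeasurable hms]
    have : ∀ᵐ q ∂(μ.prod volume), q ∉ N := by
      rw [ae_iff]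
      simpa using hNnull
    filter_upwards [this] with q hq
    exact fun hcontra => hq ⟨hcontra.1, hcontra.2⟩
  have hP' := Measure.ae_ae_of_ae_prod hP
  filter_upwards [hP'] with x hx
  rw [MeasureTheory.Measure.volume_eq_prod]
  have hS2 := measurePreserving_prod_add (volume : Measure ℝ) (volume : Measure ℝ)
  have hFx : Measurable fun ξ : ℝ => F (x, ξ) := hF_meas.comp measurable_prodMk_left
  have hms2 : MeasurableSet {q : ℝ × ℝ | q.1 ≤ q.2 → F (x, q.2) ≤ F (x, q.1)} := by
    have : {q : ℝ × ℝ | q.1 ≤ q.2 → F (x, q.2) ≤ F (x, q.1)}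
        = {q : ℝ × ℝ | q.1 ≤ q.2}ᶜ ∪ {q : ℝ × ℝ | F (x, q.2) ≤ F (x, q.1)} := by
      ext q
      simp [imp_iff_not_or]
    rw [this]
    exact ((measurableSet_le measurable_fst measurable_snd).compl).union
      (measurableSet_le (hFx.comp measurable_snd) (hFx.comp measurable_fst))
  rw [← hS2.map_eq, ae_map_iff hS2.aemeasurable hms2]
  filter_upwards [hx] with w hw
  intro hle
  by_contra hlt
  push_neg at hlt
  exact hw ⟨by linarith [hle], hlt⟩
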